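/- For any x ∈ H and y ∈ K (ultrametric normed spaces over a nonarchimedean field admitting norm-orthogonal bases of finite-dimensional subspaces), the projective norm of a simple tensor is multiplicative: ‖x ⊗ y‖_π = ‖x‖·‖y‖. -/

import Mathlib

open scoped TensorProduct

/-- The ultrametric projective seminorm on the algebraic tensor product:
`‖u‖_π = inf { maxᵢ ‖xᵢ‖·‖yᵢ‖ : u = Σᵢ xᵢ ⊗ yᵢ }`. -/
noncomputable def projNorm {F H K : Type*} [NormedField F]
    [NormedAddCommGroup H] [NormedSpace F H]
    [NormedAddCommGroup K] [NormedSpace F K] (u : H ⊗[F] K) : ℝ :=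
  sInf {r : ℝ | ∃ (n : ℕ) (x : Fin n → H) (y : Fin n → K),
    u = ∑ i, x i ⊗ₜ[F] y i ∧ r = ⨆ i, ‖x i‖ * ‖y i‖}

/-- Every finitely generated subspace admits a norm-orthogonal basis. -/
def FinDimOrthogonalizable (F E : Type*) [NormedField F]
    [NormedAddCommGroup E] [NormedSpace F E] : Prop :=
  ∀ (n : ℕ) (v : Fin n → E), ∃ (m : ℕ) (b : Fin m → E),
    Submodule.span F (Set.range v) = Submodule.span F (Set.range b) ∧
    ∀ α : Fin m → F, ‖∑ i, α i • b i‖ = ⨆ i, ‖α i • b i‖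


/-- Dual functional separating a member of a linearly independent family. -/
lemma exists_dual_of_linearIndependent {F V ι : Type*} [Field F] [AddCommGroup V]
    [Module F V] {v : ι → V} (hv : LinearIndependent F v) (i₀ : ι) :
    ∃ f : V →ₗ[F] F, f (v i₀) = 1 ∧ ∀ i, i ≠ i₀ → f (v i) = 0 := by
  classical
  have hs := (linearIndepOn_id_range_iff hv.injective).mpr hv
  let B := Module.Basis.extend hs
  have hmem : ∀ i, v i ∈ hs.extend (Set.subset_univ _) :=
    fun i => hs.subset_extend _ ⟨i, rfl⟩
  have key : ∀ i j : ι, (B.coord ⟨v i, hmem i⟩) (v j)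
      = if (⟨v j, hmem j⟩ : hs.extend (Set.subset_univ _)) = ⟨v i, hmem i⟩ then 1 else 0 := by
    intro i j
    conv_lhs => rw [show v j = B ⟨v j, hmem j⟩ from (Module.Basis.extend_apply_self hs ⟨v j, hmem j⟩).symm]
    rw [Module.Basis.coord_apply, Module.Basis.repr_self, Finsupp.single_apply]
  refine ⟨B.coord ⟨v i₀, hmem i₀⟩, ?_, ?_⟩
  · rw [key, if_pos rfl]
  · intro i hi
    rw [key, if_neg]
    intro h
    exact hi (hv.injective (congrArg Subtype.val h))

/-- If `Σ vᵢ ⊗ wᵢ = 0` with `v` linearly independent, then all `wᵢ = 0`. -/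
lemma tmul_eq_zero_of_linearIndependent {F V W ι : Type*} [Field F] [AddCommGroup V]
    [Module F V] [AddCommGroup W] [Module F W] [Fintype ι] {v : ι → V}
    (hv : LinearIndependent F v) {w : ι → W}
    (h : ∑ i, v i ⊗ₜ[F] w i = 0) : ∀ i, w i = 0 := by
  classical
  intro i₀
  obtain ⟨f, hf1, hf0⟩ := exists_dual_of_linearIndependent hv i₀
  have := congrArg (fun u => (TensorProduct.lid F W) ((f.rTensor W) u)) h
  simp only [map_sum, LinearMap.rTensor_tmul, TensorProduct.lid_tmul, map_zero] at this
  rw [Finset.sum_eq_single i₀ (fun i _ hi => by rw [hf0 i hi, zero_smul])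
    (fun hi => absurd (Finset.mem_univ i₀) hi), hf1, one_smul] at this
  exact this

/-- The nonzero members of a norm-orthogonal family are linearly independent. -/
lemma linearIndependent_of_orthogonal {F V : Type*} [NormedField F]
    [NormedAddCommGroup V] [NormedSpace F V] {m : ℕ} {b : Fin m → V}
    (hnorm : ∀ α : Fin m → F, ‖∑ i, α i • b i‖ = ⨆ i, ‖α i • b i‖) :
    LinearIndependent F (fun i : {j : Fin m // b j ≠ 0} => b i.val) := by
  classical
  rw [linearIndependent_iff']
  intro s g hg i hi
  set α : Fin m → F := fun j => if hj : b j ≠ 0 then (if ⟨j, hj⟩ ∈ s then g ⟨j, hj⟩ else 0) else 0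
    with hα
  have hsum : ∑ j, α j • b j = ∑ i ∈ s, g i • b i.val := by
    rw [← Finset.sum_subset (Finset.subset_univ (s.map (Function.Embedding.subtype _)))]
    · rw [Finset.sum_map]
      refine Finset.sum_congr rfl fun i his => ?_
      simp only [Function.Embedding.coe_subtype, hα]
      rw [dif_pos i.prop]
      rw [if_pos (by simpa using his)]
    · intro j _ hj
      by_cases hbj : b j ≠ 0
      · simp only [hα, dif_pos hbj]
        rw [if_neg, zero_smul]
        intro hmem
        exact hj (Finset.mem_map.mpr ⟨⟨j, hbj⟩, hmem, rfl⟩)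
      · push_neg at hbj
        rw [hbj, smul_zero]
  have h0 : (⨆ j, ‖α j • b j‖) = 0 := by
    rw [← hnorm, hsum, hg, norm_zero]
  have hle : ‖α i.val • b i.val‖ ≤ 0 := by
    rw [← h0]
    exact le_ciSup (f := fun j => ‖α j • b j‖) (Set.Finite.bddAbove (Set.finite_range _)) i.val
  have : α i.val • b i.val = 0 := by
    rw [← norm_le_zero_iff]; exact hle
  rcases smul_eq_zero.mp this with hg0 | hb0
  · rw [hα] at hg0
    simp only [dif_pos i.prop] at hg0
    rwa [if_pos (by simpa using hi)] at hg0
  · exact absurd hb0 i.prop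

lemma zero_of_orthogonal_tmul {F V W : Type*} [NormedField F]
    [NormedAddCommGroup V] [NormedSpace F V] [AddCommGroup W] [Module F W]
    {m : ℕ} {b : Fin m → V}
    (hnorm : ∀ α : Fin m → F, ‖∑ i, α i • b i‖ = ⨆ i, ‖α i • b i‖)
    {z : Fin m → W} (h : ∑ j, b j ⊗ₜ[F] z j = 0) :
    ∀ j, b j ≠ 0 → z j = 0 := by
  classical
  intro j hj
  have hsum : ∑ i : {j : Fin m // b j ≠ 0}, b i.val ⊗ₜ[F] z i.val = 0 := by
    rw [← h]
    rw [← Finset.sum_subset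
      (Finset.subset_univ ((Finset.univ : Finset {j : Fin m // b j ≠ 0}).map
        (Function.Embedding.subtype _)))]
    · rw [Finset.sum_map]; rfl
    · intro i _ hi
      have : b i = 0 := by
        by_contra hbi
        exact hi (Finset.mem_map.mpr ⟨⟨i, hbi⟩, Finset.mem_univ _, rfl⟩)
      rw [this, TensorProduct.zero_tmul]
  exact tmul_eq_zero_of_linearIndependent (linearIndependent_of_orthogonal hnorm) hsum ⟨j, hj⟩

/-- For `x ∈ H` and `y ∈ K` (ultrametric normed spaces over a
nonarchimedean field in which every finitely generated subspace admits a norm-orthogonal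
basis), the projective norm of a simple tensor is multiplicative:
`‖x ⊗ y‖_π = ‖x‖ · ‖y‖`. -/
theorem projNorm_tmul
    {F H K : Type*} [NormedField F] [IsUltrametricDist F]
    [NormedAddCommGroup H] [NormedSpace F H] [IsUltrametricDist H]
    [NormedAddCommGroup K] [NormedSpace F K] [IsUltrametricDist K]
    (hH : FinDimOrthogonalizable F H) (hK : FinDimOrthogonalizable F K)
    (x : H) (y : K) :
    projNorm (x ⊗ₜ[F] y) = ‖x‖ * ‖y‖ := by
  classical
  have hmem : ‖x‖ * ‖y‖ ∈ {r : ℝ | ∃ (n : ℕ) (xs : Fin n → H) (ys : Fin n → K),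
      x ⊗ₜ[F] y = ∑ i, xs i ⊗ₜ[F] ys i ∧ r = ⨆ i, ‖xs i‖ * ‖ys i‖} :=
    ⟨1, fun _ => x, fun _ => y, by simp, (ciSup_const).symm⟩
  rw [projNorm]
  refine le_antisymm (csInf_le ⟨0, ?_⟩ hmem) (le_csInf ⟨_, hmem⟩ ?_)
  · rintro r ⟨n, xs, ys, -, rfl⟩
    exact Real.iSup_nonneg fun i => mul_nonneg (norm_nonneg _) (norm_nonneg _)
  · rintro r ⟨n, xs, ys, hsum, rfl⟩
    by_cases hx : x = 0
    · rw [hx, norm_zero, zero_mul]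
      exact Real.iSup_nonneg fun i => mul_nonneg (norm_nonneg _) (norm_nonneg _)
    by_cases hy : y = 0
    · rw [hy, norm_zero, mul_zero]
      exact Real.iSup_nonneg fun i => mul_nonneg (norm_nonneg _) (norm_nonneg _)
    obtain ⟨m, b, hspan, hnorm⟩ := hH (n + 1) (Fin.cons x xs)
    obtain ⟨β, hβ⟩ : ∃ c : Fin m → F, ∑ j, c j • b j = x := by
      rw [← Submodule.mem_span_range_iff_exists_fun, ← hspan]
      exact Submodule.subset_span ⟨0, rfl⟩
    have hα : ∀ i, ∃ c : Fin m → F, ∑ j, c j • b j = xs i := by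
      intro i
      rw [← Submodule.mem_span_range_iff_exists_fun, ← hspan]
      exact Submodule.subset_span ⟨i.succ, rfl⟩
    choose α hα using hα
    -- the key vanishing relation
    set z : Fin m → K := fun j => β j • y - ∑ i, α i j • ys i with hz
    have hz0 : ∑ j, b j ⊗ₜ[F] z j = 0 := by
      have e1 : ∑ j, b j ⊗ₜ[F] (β j • y) = x ⊗ₜ[F] y := by
        rw [← hβ, TensorProduct.sum_tmul]
        exact Finset.sum_congr rfl fun j _ => (TensorProduct.smul_tmul _ _ _).symm
      have e2 : ∑ j, b j ⊗ₜ[F] (∑ i, α i j • ys i) = ∑ i, xs i ⊗ₜ[F] ys i := by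
        calc ∑ j, b j ⊗ₜ[F] (∑ i, α i j • ys i)
            = ∑ j, ∑ i, (α i j • b j) ⊗ₜ[F] ys i := by
              refine Finset.sum_congr rfl fun j _ => ?_
              rw [TensorProduct.tmul_sum]
              exact Finset.sum_congr rfl fun i _ => (TensorProduct.smul_tmul _ _ _).symm
          _ = ∑ i, (∑ j, α i j • b j) ⊗ₜ[F] ys i := by
              rw [Finset.sum_comm]
              exact Finset.sum_congr rfl fun i _ => (TensorProduct.sum_tmul _ _ _).symm
          _ = ∑ i, xs i ⊗ₜ[F] ys i := by
              exact Finset.sum_congr rfl fun i _ => by rw [hα]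
      simp only [hz, TensorProduct.tmul_sub, Finset.sum_sub_distrib, e1, e2, ← hsum, sub_self]
    have hzero := zero_of_orthogonal_tmul hnorm hz0
    have hxnorm : ‖x‖ = ⨆ j, ‖β j • b j‖ := by rw [← hβ]; exact hnorm β
    have hm : Nonempty (Fin m) := by
      rcases Nat.eq_zero_or_pos m with rfl | hm
      · exfalso
        rw [Real.iSup_of_isEmpty] at hxnorm
        exact hx (norm_eq_zero.mp hxnorm)
      · exact ⟨⟨0, hm⟩⟩
    obtain ⟨j₀, hj₀⟩ := exists_eq_ciSup_of_finite (f := fun j => ‖β j • b j‖)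
    have hbx : ‖x‖ = ‖β j₀ • b j₀‖ := by rw [hxnorm, ← hj₀]
    have hbb : β j₀ • b j₀ ≠ 0 := by
      intro h; rw [h, norm_zero] at hbx; exact hx (norm_eq_zero.mp hbx)
    have hb0 : b j₀ ≠ 0 := fun h => hbb (by rw [h, smul_zero])
    have hβ0 : β j₀ ≠ 0 := fun h => hbb (by rw [h, zero_smul])
    have hyy : β j₀ • y = ∑ i, α i j₀ • ys i := by
      have := hzero j₀ hb0
      rw [hz] at this
      exact sub_eq_zero.mp this
    have hn : (Finset.univ : Finset (Fin n)).Nonempty := by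
      rcases Nat.eq_zero_or_pos n with rfl | hn
      · exfalso
        rw [Finset.univ_eq_empty, Finset.sum_empty] at hyy
        rcases smul_eq_zero.mp hyy with h | h
        · exact hβ0 h
        · exact hy h
      · exact ⟨⟨0, hn⟩, Finset.mem_univ _⟩
    have hle : ‖β j₀ • y‖ ≤ Finset.univ.sup' hn (fun i => ‖α i j₀ • ys i‖) := by
      rw [hyy]; exact hn.norm_sum_le_sup'_norm _
    obtain ⟨i₀, -, hi₀⟩ := Finset.exists_mem_eq_sup' hn (fun i => ‖α i j₀ • ys i‖)
    have hle2 : ‖β j₀ • y‖ ≤ ‖α i₀ j₀ • ys i₀‖ := by rw [hi₀] at hle; exact hle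
    have step1 : ‖x‖ * ‖y‖ ≤ ‖b j₀‖ * ‖α i₀ j₀ • ys i₀‖ := by
      rw [hbx, norm_smul]
      calc ‖β j₀‖ * ‖b j₀‖ * ‖y‖ = ‖b j₀‖ * ‖β j₀ • y‖ := by rw [norm_smul]; ring
        _ ≤ _ := mul_le_mul_of_nonneg_left hle2 (norm_nonneg _)
    have step2 : ‖b j₀‖ * ‖α i₀ j₀ • ys i₀‖ ≤ ‖xs i₀‖ * ‖ys i₀‖ := by
      rw [norm_smul]
      have hb : ‖α i₀ j₀‖ * ‖b j₀‖ ≤ ‖xs i₀‖ := by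
        rw [← hα i₀, hnorm]
        have h := le_ciSup (f := fun j => ‖α i₀ j • b j‖)
          (Set.Finite.bddAbove (Set.finite_range _)) j₀
        rwa [norm_smul] at h
      calc ‖b j₀‖ * (‖α i₀ j₀‖ * ‖ys i₀‖) = ‖α i₀ j₀‖ * ‖b j₀‖ * ‖ys i₀‖ := by ring
        _ ≤ ‖xs i₀‖ * ‖ys i₀‖ := mul_le_mul_of_nonneg_right hb (norm_nonneg _)
    have step3 : ‖xs i₀‖ * ‖ys i₀‖ ≤ ⨆ i, ‖xs i‖ * ‖ys i‖ :=
      le_ciSup (f := fun i => ‖xs i‖ * ‖ys i‖) (Set.Finite.bddAbove (Set.finite_range _)) i₀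
    linarith
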